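/- Let N ≥ 1, ε ∈ (0, 1], and let α, β : ℝᴺ → ℝ be C¹ functions with |α(y)|, |β(y)|, ‖α′(y)‖, ‖β′(y)‖ ≤ M for all y and β(y) ≥ β₀ > 0. Let Ū : ℝᴺ → ℝ be C¹ with K := sup_y (1 + ‖y‖)(|Ū(y)| + ‖∇Ū(y)‖) < ∞. For P, x ∈ ℝᴺ set W(P) := α(εP)·Ū(β(εP)(x − P)). Then for every unit vector e ∈ ℝᴺ the directional derivative of P ↦ W(P) along e exists and satisfies ∂_e W(P) = −α(εP)β(εP)·⟨∇Ū(β(εP)(x − P)), e⟩ + R, where |R| ≤ ε·M·K·(1 + M/β₀), uniformly in P and x. -/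

import Mathlib

open MeasureTheory Real RealInnerProductSpace

set_option maxHeartbeats 1000000 in
/-- Estimate (3.3) in the proof of Lemma 3.1: for `W(P) = α(εP) Ū(β(εP)(x − P))`, the
directional derivative along a unit vector `e` is
`−α(εP)β(εP)⟨∇Ū(β(εP)(x − P)), e⟩ + R` with `|R| ≤ ε M K (1 + M/β₀)`. -/
theorem stmt11 (N : ℕ) (hN : 1 ≤ N) (ε : ℝ) (hε0 : 0 < ε) (hε1 : ε ≤ 1)
    (α β : EuclideanSpace ℝ (Fin N) → ℝ) (hα : ContDiff ℝ 1 α) (hβ : ContDiff ℝ 1 β)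
    (M β₀ : ℝ) (hβ₀ : 0 < β₀)
    (hαb : ∀ y, |α y| ≤ M) (hβb : ∀ y, |β y| ≤ M)
    (hαd : ∀ y, ‖fderiv ℝ α y‖ ≤ M) (hβd : ∀ y, ‖fderiv ℝ β y‖ ≤ M)
    (hβlb : ∀ y, β₀ ≤ β y)
    (Ubar : EuclideanSpace ℝ (Fin N) → ℝ) (hUbar : ContDiff ℝ 1 Ubar)
    (K : ℝ) (hK : ∀ y, (1 + ‖y‖) * (|Ubar y| + ‖gradient Ubar y‖) ≤ K) :
    ∀ (x P e : EuclideanSpace ℝ (Fin N)), ‖e‖ = 1 →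
      ∃ R : ℝ, |R| ≤ ε * M * K * (1 + M / β₀) ∧
        HasLineDerivAt ℝ (fun P' => α (ε • P') * Ubar (β (ε • P') • (x - P')))
          (-(α (ε • P) * β (ε • P)) * ⟪gradient Ubar (β (ε • P) • (x - P)), e⟫ + R)
          P e := by
  have hM : 0 ≤ M := le_trans (abs_nonneg _) (hαb 0)
  intro x P e he
  set z : EuclideanSpace ℝ (Fin N) := β (ε • P) • (x - P) with hzdef
  set a : ℝ := α (ε • P) with hadef
  set b : ℝ := β (ε • P) with hbdef
  set Dα := fderiv ℝ α (ε • P) with hDαdef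
  set Dβ := fderiv ℝ β (ε • P) with hDβdef
  set g : EuclideanSpace ℝ (Fin N) := gradient Ubar z with hgdef
  have hgrad : ∀ v, (fderiv ℝ Ubar z) v = ⟪g, v⟫ := by
    intro v
    rw [hgdef, gradient, InnerProductSpace.toDual_symm_apply]
  -- bounds
  have hb0 : (0:ℝ) < b := lt_of_lt_of_le hβ₀ (hβlb _)
  have hKz := hK z
  have hUz : |Ubar z| ≤ K := by nlinarith [norm_nonneg z, abs_nonneg (Ubar z), norm_nonneg g]
  have hgz : ‖g‖ * ‖z‖ ≤ K := by nlinarith [norm_nonneg z, abs_nonneg (Ubar z), norm_nonneg g]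
  have hK0 : 0 ≤ K := le_trans (by positivity) hKz
  have hxP : ‖x - P‖ ≤ ‖z‖ / β₀ := by
    rw [hzdef, norm_smul, Real.norm_eq_abs, abs_of_pos hb0, le_div_iff₀ hβ₀, mul_comm]
    exact mul_le_mul_of_nonneg_right (hβlb _) (norm_nonneg _)
  have hDαe : |Dα e| ≤ M := by
    calc |Dα e| ≤ ‖Dα‖ * ‖e‖ := Dα.le_opNorm e
    _ ≤ M := by rw [he, mul_one]; exact hαd _
  have hDβe : |Dβ e| ≤ M := by
    calc |Dβ e| ≤ ‖Dβ‖ * ‖e‖ := Dβ.le_opNorm e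
    _ ≤ M := by rw [he, mul_one]; exact hβd _
  have hinnb : |⟪g, x - P⟫| ≤ K / β₀ := by
    calc |⟪g, x - P⟫| ≤ ‖g‖ * ‖x - P‖ := abs_real_inner_le_norm g (x - P)
    _ ≤ ‖g‖ * (‖z‖ / β₀) := mul_le_mul_of_nonneg_left hxP (norm_nonneg g)
    _ = ‖g‖ * ‖z‖ / β₀ := by ring
    _ ≤ K / β₀ := by gcongr
  -- the remainder
  refine ⟨ε * Dα e * Ubar z + a * (ε * Dβ e) * ⟪g, x - P⟫, ?_, ?_⟩
  · have t1 : |ε * Dα e * Ubar z| ≤ ε * M * K := by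
      rw [abs_mul, abs_mul, abs_of_pos hε0]
      gcongr
    have t2 : |a * (ε * Dβ e) * ⟪g, x - P⟫| ≤ M * (ε * M) * (K / β₀) := by
      rw [abs_mul, abs_mul, abs_mul, abs_of_pos hε0]
      gcongr
      exact hαb _
    calc |ε * Dα e * Ubar z + a * (ε * Dβ e) * ⟪g, x - P⟫|
        ≤ |ε * Dα e * Ubar z| + |a * (ε * Dβ e) * ⟪g, x - P⟫| := abs_add_le _ _
      _ ≤ ε * M * K + M * (ε * M) * (K / β₀) := add_le_add t1 t2
      _ = ε * M * K * (1 + M / β₀) := by field_simp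
  -- the derivative computation
  · have h0 : HasDerivAt (fun t : ℝ => P + t • e) e 0 := by
      simpa using ((hasDerivAt_id (0:ℝ)).smul_const e).const_add P
    have haff : HasDerivAt (fun t : ℝ => ε • (P + t • e)) (ε • e) 0 := h0.const_smul ε
    have hP0 : ε • (P + (0:ℝ) • e) = ε • P := by simp
    have hαF : HasFDerivAt α Dα (ε • (P + (0:ℝ) • e)) := by
      rw [hP0]; exact (hα.differentiable one_ne_zero (ε • P)).hasFDerivAt
    have hβF : HasFDerivAt β Dβ (ε • (P + (0:ℝ) • e)) := by
      rw [hP0]; exact (hβ.differentiable one_ne_zero (ε • P)).hasFDerivAt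
    have hαA : HasDerivAt (fun t : ℝ => α (ε • (P + t • e))) (Dα (ε • e)) 0 :=
      hαF.comp_hasDerivAt 0 haff
    have hβA : HasDerivAt (fun t : ℝ => β (ε • (P + t • e))) (Dβ (ε • e)) 0 :=
      hβF.comp_hasDerivAt 0 haff
    have hsub : HasDerivAt (fun t : ℝ => x - (P + t • e)) (-e) 0 := h0.const_sub x
    have hinner : HasDerivAt (fun t : ℝ => β (ε • (P + t • e)) • (x - (P + t • e)))
        (β (ε • (P + (0:ℝ) • e)) • (-e) + Dβ (ε • e) • (x - (P + (0:ℝ) • e))) 0 :=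
      hβA.smul hsub
    have hval : β (ε • (P + (0:ℝ) • e)) • (x - (P + (0:ℝ) • e)) = z := by
      simp [hzdef, hbdef]
    have hUF : HasFDerivAt Ubar (fderiv ℝ Ubar z)
        (β (ε • (P + (0:ℝ) • e)) • (x - (P + (0:ℝ) • e))) := by
      rw [hval]; exact (hUbar.differentiable one_ne_zero z).hasFDerivAt
    have hcomp : HasDerivAt (fun t : ℝ => Ubar (β (ε • (P + t • e)) • (x - (P + t • e))))
        ((fderiv ℝ Ubar z) (β (ε • (P + (0:ℝ) • e)) • (-e) + Dβ (ε • e) • (x - (P + (0:ℝ) • e)))) 0 :=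
      hUF.comp_hasDerivAt 0 hinner
    have hprod : HasDerivAt (fun t : ℝ => α (ε • (P + t • e)) * Ubar (β (ε • (P + t • e)) • (x - (P + t • e)))) _ 0 :=
      hαA.mul hcomp
    show HasDerivAt (fun t : ℝ => α (ε • (P + t • e)) * Ubar (β (ε • (P + t • e)) • (x - (P + t • e)))) _ 0
    convert hprod using 1
    simp only [zero_smul, add_zero, _root_.map_smul, smul_eq_mul, hgrad,
      inner_add_right, real_inner_smul_right, inner_neg_right]
    rw [← hadef, ← hbdef]
    ring
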